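/- Let (X,κ) be a digital image. Then X is κ-connected if and only if K(X,κ') is κ'-connected. -/
import Mathlib


/-- `a` and `b` are adjacent or equal ("⟷≤") with respect to adjacency relation `α`. -/
def AdjEq {A : Type*} (α : A → A → Prop) (a b : A) : Prop := α a b ∨ a = b

/-- `f : (X,κ) → (Y,lam)` is digitally continuous: adjacency is sent to
adjacency-or-equality. -/
def DigCont {X Y : Type*} (κ : X → X → Prop) (lam : Y → Y → Prop) (f : X → Y) : Prop :=
  ∀ x x', κ x x' → AdjEq lam (f x) (f x')

/-- Continuity of `f` relative to carrier sets: `f` maps `S` into `T` and sends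
`α`-adjacent elements of `S` to `β`-adjacent-or-equal elements. -/
def ContOn {A B : Type*} (α : A → A → Prop) (β : B → B → Prop)
    (S : Set A) (T : Set B) (f : A → B) : Prop :=
  (∀ a ∈ S, f a ∈ T) ∧ ∀ a ∈ S, ∀ a' ∈ S, α a a' → AdjEq β (f a) (f a')

/-- The hyperspace adjacency `κ'`: distinct `A, B` are adjacent iff every point of `A`
is adjacent-or-equal to some point of `B` and vice versa. -/
def HyperAdj {X : Type*} (κ : X → X → Prop) (A B : Finset X) : Prop :=
  A ≠ B ∧ (∀ a ∈ A, ∃ b ∈ B, AdjEq κ a b) ∧ ∀ b ∈ B, ∃ a ∈ A, AdjEq κ b a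

/-- A subset `S` is connected w.r.t. adjacency `α`: any two of its points are joined by
a path (finite sequence of consecutively adjacent-or-equal points) lying in `S`. -/
def ConnIn {A : Type*} (α : A → A → Prop) (S : Set A) : Prop :=
  ∀ a ∈ S, ∀ b ∈ S, ∃ (n : ℕ) (p : ℕ → A), p 0 = a ∧ p n = b ∧
    (∀ i ≤ n, p i ∈ S) ∧ ∀ i < n, AdjEq α (p i) (p (i + 1))

/-- `a` and `b` are joined by a path lying in `S` (i.e. they are in the same
connected component of the graph induced on `S`). -/
def Chain {A : Type*} (α : A → A → Prop) (S : Set A) (a b : A) : Prop :=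
  ∃ (n : ℕ) (p : ℕ → A), p 0 = a ∧ p n = b ∧
    (∀ i ≤ n, p i ∈ S) ∧ ∀ i < n, AdjEq α (p i) (p (i + 1))

/-- The carrier of the hyperspace `2^X`: nonempty finite subsets of `X`. -/
def TwoX (X : Type*) : Set (Finset X) := {A | A.Nonempty}

/-- The carrier of `K(X,κ')`: nonempty finite κ-connected subsets of `X`. -/
def KSet {X : Type*} (κ : X → X → Prop) : Set (Finset X) :=
  {A | A.Nonempty ∧ ConnIn κ (A : Set X)}

/-- A digital homotopy from `f` to `g`, relative to carriers `S`, `T`: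
a function `F : S × [0,m] → T` with `F(·,0) = f`, `F(·,m) = g`, all tracks
`t ↦ F(a,t)` are paths, and all time slices `a ↦ F(a,t)` are continuous. -/
def HtpyOn {A B : Type*} (α : A → A → Prop) (β : B → B → Prop)
    (S : Set A) (T : Set B) (f g : A → B) : Prop :=
  ∃ (m : ℕ) (F : A → ℕ → B),
    (∀ a ∈ S, ∀ t ≤ m, F a t ∈ T) ∧
    (∀ a ∈ S, F a 0 = f a) ∧ (∀ a ∈ S, F a m = g a) ∧
    (∀ a ∈ S, ∀ t < m, AdjEq β (F a t) (F a (t + 1))) ∧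
    (∀ t ≤ m, ∀ a ∈ S, ∀ a' ∈ S, α a a' → AdjEq β (F a t) (F a' t))

/-- A digital homotopy from `f` to `g` in exactly `m` steps (on full types). -/
def HtpyN {X Y : Type*} (κ : X → X → Prop) (lam : Y → Y → Prop)
    (f g : X → Y) (m : ℕ) : Prop :=
  ∃ F : X → ℕ → Y,
    (∀ x, F x 0 = f x) ∧ (∀ x, F x m = g x) ∧
    (∀ x, ∀ t < m, AdjEq lam (F x t) (F x (t + 1))) ∧
    (∀ t ≤ m, DigCont κ lam fun x => F x t)

/-- `f` and `g` are digitally homotopic. -/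
def Htpy {X Y : Type*} (κ : X → X → Prop) (lam : Y → Y → Prop) (f g : X → Y) : Prop :=
  ∃ m, HtpyN κ lam f g m

/-- The graphs on carriers `S` and `T` have the same homotopy type. -/
def HtpyEquivOn {A B : Type*} (α : A → A → Prop) (β : B → B → Prop)
    (S : Set A) (T : Set B) : Prop :=
  ∃ (f : A → B) (g : B → A),
    ContOn α β S T f ∧ ContOn β α T S g ∧
    HtpyOn α α S S (g ∘ f) id ∧ HtpyOn β β T T (f ∘ g) id

/-- The graph on carrier `S` is contractible: the identity is homotopic to a constant. -/
def ContractibleOn {A : Type*} (α : A → A → Prop) (S : Set A) : Prop :=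
  ∃ c ∈ S, HtpyOn α α S S id fun _ => c

/-- `Φ`-adjacency of functions: `f ≠ g` and `f(x) ⟷≤ g(x)` for all `x`. -/
def PhiAdj {X Y : Type*} (lam : Y → Y → Prop) (f g : X → Y) : Prop :=
  f ≠ g ∧ ∀ x, AdjEq lam (f x) (g x)

/-- `Ψ`-adjacency of functions: `f ≠ g` and `x₀ ⟷≤ x₁` implies `f(x₀) ⟷≤ g(x₁)`. -/
def PsiAdj {X Y : Type*} (κ : X → X → Prop) (lam : Y → Y → Prop) (f g : X → Y) : Prop :=
  f ≠ g ∧ ∀ x₀ x₁, AdjEq κ x₀ x₁ → AdjEq lam (f x₀) (g x₁)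

/-- `C` is a connected component of the graph induced on the vertex set `V`:
a maximal connected subset of `V`. -/
def IsComponentIn {A : Type*} (α : A → A → Prop) (V C : Set A) : Prop :=
  C ⊆ V ∧ ConnIn α C ∧ ∀ C' : Set A, C' ⊆ V → ConnIn α C' → C ⊆ C' → C' = C


section ChainLemmas

variable {A : Type*} {α : A → A → Prop} {S T : Set A}

lemma adjEq_symm (hs : ∀ x y, α x y → α y x) {a b : A} (h : AdjEq α a b) : AdjEq α b a := by
  rcases h with h | h
  · exact Or.inl (hs _ _ h)
  · exact Or.inr h.symm

lemma chain_refl {a : A} (h : a ∈ S) : Chain α S a a :=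
  ⟨0, fun _ => a, rfl, rfl, fun _ _ => h, fun i hi => absurd hi (Nat.not_lt_zero i)⟩

lemma chain_mono (hST : S ⊆ T) {a b : A} (h : Chain α S a b) : Chain α T a b := by
  obtain ⟨n, p, h0, hn, hmem, hadj⟩ := h
  exact ⟨n, p, h0, hn, fun i hi => hST (hmem i hi), hadj⟩

lemma chain_mem_right {a b : A} (h : Chain α S a b) : b ∈ S := by
  obtain ⟨n, p, h0, hn, hmem, _⟩ := h
  exact hn ▸ hmem n le_rfl

lemma chain_step {a b c : A} (h : Chain α S a b) (hc : c ∈ S) (hbc : AdjEq α b c) :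
    Chain α S a c := by
  obtain ⟨n, p, h0, hn, hmem, hadj⟩ := h
  refine ⟨n + 1, fun i => if i ≤ n then p i else c, by simpa using h0, by simp, ?_, ?_⟩
  · intro i hi
    by_cases h : i ≤ n
    · simpa [h] using hmem i h
    · simpa [h] using hc
  · intro i hi
    by_cases h : i < n
    · simpa [Nat.le_of_lt h, Nat.succ_le_of_lt h] using hadj i h
    · have hin : i = n := by omega
      subst hin
      simpa [hn] using hbc

lemma chain_trans {a b c : A} (h1 : Chain α S a b) (h2 : Chain α S b c) :
    Chain α S a c := by
  obtain ⟨n, p, h0, hn, hmem, hadj⟩ := h2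
  have key : ∀ i ≤ n, Chain α S a (p i) := by
    intro i
    induction i with
    | zero => intro _; rw [h0]; exact h1
    | succ i ih =>
        intro hi
        exact chain_step (ih (by omega)) (hmem _ hi) (hadj i (by omega))
  exact hn ▸ key n le_rfl

lemma chain_symm (hs : ∀ x y, α x y → α y x) {a b : A} (h : Chain α S a b) :
    Chain α S b a := by
  obtain ⟨n, p, h0, hn, hmem, hadj⟩ := h
  refine ⟨n, fun i => p (n - i), by simpa using hn, by simpa using h0,
    fun i _ => hmem _ (by omega), fun i hi => ?_⟩
  have h1 : n - i = (n - (i + 1)) + 1 := by omega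
  have h2 := hadj (n - (i + 1)) (by omega)
  show AdjEq α (p (n - i)) (p (n - (i + 1)))
  rw [h1]
  exact adjEq_symm hs h2

lemma connIn_insert {X : Type*} {κ : X → X → Prop} (hs : ∀ x y, κ x y → κ y x)
    {S : Set X} (hS : ConnIn κ S) {s x : X} (hsS : s ∈ S) (hx : AdjEq κ x s) :
    ConnIn κ (insert x S) := by
  intro u hu v hv
  have hxs : Chain κ (insert x S) x s :=
    chain_step (chain_refl (Set.mem_insert _ _)) (Set.mem_insert_of_mem _ hsS) hx
  rcases hu with rfl | hu
  · rcases hv with rfl | hv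
    · exact chain_refl (Set.mem_insert _ _)
    · exact chain_trans hxs (chain_mono (Set.subset_insert _ _) (hS s hsS v hv))
  · rcases hv with rfl | hv
    · exact chain_step (chain_mono (Set.subset_insert _ _) (hS u hu s hsS))
        (Set.mem_insert _ _) (adjEq_symm hs hx)
    · exact chain_mono (Set.subset_insert _ _) (hS u hu v hv)

end ChainLemmas

section HyperLemmas

variable {X : Type*} {κ : X → X → Prop}

lemma hyperAdj_symm {P Q : Finset X} (h : HyperAdj κ P Q) : HyperAdj κ Q P :=
  ⟨h.1.symm, h.2.2, h.2.1⟩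

lemma grow_along [DecidableEq X] (hs : ∀ x y, κ x y → κ y x)
    (A : Finset X) (hA : A ∈ KSet κ) (p : ℕ → X) (h0 : p 0 ∈ A) :
    ∀ n, (∀ i < n, AdjEq κ (p i) (p (i + 1))) →
      Chain (HyperAdj κ) (KSet κ) A (A ∪ (Finset.range (n + 1)).image p) := by
  intro n
  induction n with
  | zero =>
      intro _
      have : A ∪ (Finset.range 1).image p = A := by
        apply Finset.union_eq_left.mpr
        intro x hx
        simp only [Finset.range_one, Finset.image_singleton, Finset.mem_singleton] at hx
        exact hx ▸ h0
      rw [this]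
      exact chain_refl hA
  | succ n ih =>
      intro hadj
      have hchain := ih (fun i hi => hadj i (by omega))
      set S := A ∪ (Finset.range (n + 1)).image p with hSdef
      have hSK : S ∈ KSet κ := chain_mem_right hchain
      have hkey : A ∪ (Finset.range (n + 2)).image p = insert (p (n + 1)) S := by
        rw [hSdef, show n + 2 = (n + 1) + 1 from rfl, Finset.range_add_one,
          Finset.image_insert, Finset.union_insert]
      by_cases hmem : p (n + 1) ∈ S
      · rw [hkey, Finset.insert_eq_self.mpr hmem]
        exact hchain
      · have hpn : p n ∈ S := by
          apply Finset.mem_union_right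
          exact Finset.mem_image.mpr ⟨n, Finset.mem_range.mpr (by omega), rfl⟩
        have hκadj : κ (p n) (p (n + 1)) := by
          rcases hadj n (by omega) with h | h
          · exact h
          · exact absurd (h ▸ hpn) hmem
        have hS'K : insert (p (n + 1)) S ∈ KSet κ := by
          constructor
          · exact ⟨p (n + 1), Finset.mem_insert_self _ _⟩
          · rw [Finset.coe_insert]
            exact connIn_insert hs hSK.2 (Finset.mem_coe.mpr hpn)
              (Or.inl (hs _ _ hκadj))
        have hhadj : HyperAdj κ S (insert (p (n + 1)) S) := by
          refine ⟨?_, ?_, ?_⟩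
          · intro h
            exact hmem (h ▸ Finset.mem_insert_self _ _)
          · intro a ha
            exact ⟨a, Finset.mem_insert_of_mem ha, Or.inr rfl⟩
          · intro b hb
            rcases Finset.mem_insert.mp hb with rfl | hb
            · exact ⟨p n, hpn, Or.inl (hs _ _ hκadj)⟩
            · exact ⟨b, hb, Or.inr rfl⟩
        rw [hkey]
        exact chain_step hchain hS'K (Or.inl hhadj)

lemma absorb [DecidableEq X] (hs : ∀ x y, κ x y → κ y x)
    (B : Finset X) (hB : ConnIn κ (B : Set X)) :
    ∀ k (S : Finset X), (B \ S).card ≤ k → S ∈ KSet κ → (∃ b ∈ S, b ∈ B) →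
      Chain (HyperAdj κ) (KSet κ) S (S ∪ B) := by
  intro k
  induction k with
  | zero =>
      intro S hcard hS _
      have hsub : B ⊆ S := by
        rw [← Finset.sdiff_eq_empty_iff_subset]
        exact Finset.card_eq_zero.mp (Nat.le_zero.mp hcard)
      rw [Finset.union_eq_left.mpr hsub]
      exact chain_refl hS
  | succ k ih =>
      intro S hcard hS hb
      by_cases hBS : B ⊆ S
      · rw [Finset.union_eq_left.mpr hBS]
        exact chain_refl hS
      · obtain ⟨b, hbS, hbB⟩ := hb
        obtain ⟨b', hb'B, hb'S⟩ := Finset.not_subset.mp hBS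
        obtain ⟨n, q, hq0, hqn, hqmem, hqadj⟩ :=
          hB b (Finset.mem_coe.mpr hbB) b' (Finset.mem_coe.mpr hb'B)
        have hchain := grow_along hs S hS q (hq0 ▸ hbS) n hqadj
        set Q := (Finset.range (n + 1)).image q with hQdef
        set S' := S ∪ Q with hS'def
        have hS'K : S' ∈ KSet κ := chain_mem_right hchain
        have hQB : Q ⊆ B := by
          intro x hx
          obtain ⟨i, hi, rfl⟩ := Finset.mem_image.mp hx
          exact Finset.mem_coe.mp (hqmem i (by simpa using Nat.lt_succ_iff.mp (Finset.mem_range.mp hi)))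
        have hb'S' : b' ∈ S' := by
          apply Finset.mem_union_right
          exact Finset.mem_image.mpr ⟨n, Finset.mem_range.mpr (by omega), hqn⟩
        have hcard' : (B \ S').card ≤ k := by
          have hss : B \ S' ⊂ B \ S := by
            constructor
            · exact Finset.sdiff_subset_sdiff (le_refl B) Finset.subset_union_left
            · intro hcon
              have := hcon (Finset.mem_sdiff.mpr ⟨hb'B, hb'S⟩)
              exact (Finset.mem_sdiff.mp this).2 hb'S'
          have := Finset.card_lt_card hss
          omega
        have hrest := ih S' hcard' hS'K ⟨b', hb'S', hb'B⟩
        have hUeq : S' ∪ B = S ∪ B := by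
          rw [hS'def, Finset.union_assoc, Finset.union_eq_right.mpr hQB]
        rw [← hUeq]
        exact chain_trans hchain hrest

end HyperLemmas

/-- `X` is `κ`-connected iff `K(X,κ')` is `κ'`-connected. -/
theorem stmt15 {X : Type*}
    (κ : X → X → Prop)
    (hκsymm : ∀ x y, κ x y → κ y x) (hκirr : ∀ x, ¬ κ x x) :
    ConnIn κ (Set.univ : Set X) ↔ ConnIn (HyperAdj κ) (KSet κ) := by
  classical
  constructor
  · intro hX A hA B hB
    show Chain (HyperAdj κ) (KSet κ) A B
    obtain ⟨a, ha⟩ := hA.1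
    obtain ⟨b, hb⟩ := hB.1
    have hBconn := hB.2
    obtain ⟨n, p, hp0, hpn, _, hpadj⟩ := hX a trivial b trivial
    have h1 : Chain (HyperAdj κ) (KSet κ) A (A ∪ (Finset.range (n + 1)).image p) :=
      grow_along hκsymm A hA p (hp0 ▸ ha) n hpadj
    set P := (Finset.range (n + 1)).image p with hPdef
    have hbP : b ∈ A ∪ P := by
      apply Finset.mem_union_right
      exact Finset.mem_image.mpr ⟨n, Finset.mem_range.mpr (by omega), hpn⟩
    have h2 : Chain (HyperAdj κ) (KSet κ) (A ∪ P) (A ∪ P ∪ B) :=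
      absorb hκsymm B hBconn (B \ (A ∪ P)).card (A ∪ P) le_rfl
        (chain_mem_right h1) ⟨b, hbP, hb⟩
    set U := A ∪ P ∪ B with hUdef
    have hUK : U ∈ KSet κ := chain_mem_right h2
    have hbU : b ∈ U := Finset.mem_union_right _ hb
    have h3 : Chain (HyperAdj κ) (KSet κ) B (B ∪ U) :=
      absorb hκsymm U hUK.2 (U \ B).card B le_rfl hB ⟨b, hb, hbU⟩
    have hBU : B ∪ U = U := Finset.union_eq_right.mpr fun x hx => Finset.mem_union_right _ hx
    rw [hBU] at h3
    exact chain_trans (chain_trans h1 h2) (chain_symm (fun _ _ => hyperAdj_symm) h3)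
  · intro hK x _ y _
    show Chain κ Set.univ x y
    have hsing : ∀ z : X, ({z} : Finset X) ∈ KSet κ := by
      intro z
      refine ⟨Finset.singleton_nonempty z, ?_⟩
      intro u hu v hv
      simp only [Finset.coe_singleton, Set.mem_singleton_iff] at hu hv
      subst hu; subst hv
      exact chain_refl (by simp)
    obtain ⟨N, P, hP0, hPN, hPmem, hPadj⟩ := hK {x} (hsing x) {y} (hsing y)
    have key : ∀ i ≤ N, ∀ z ∈ P i, Chain κ Set.univ x z := by
      intro i
      induction i with
      | zero =>
          intro _ z hz
          rw [hP0] at hz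
          rw [Finset.mem_singleton.mp hz]
          exact chain_refl trivial
      | succ i ih =>
          intro hi z hz
          rcases hPadj i (by omega) with hadj | heq
          · obtain ⟨a, haPi, hza⟩ := hadj.2.2 z hz
            exact chain_step (ih (by omega) a haPi) trivial (adjEq_symm hκsymm hza)
          · exact ih (by omega) z (heq ▸ hz)
    exact key N le_rfl y (hPN ▸ Finset.mem_singleton_self y)
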